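/- Let G : ℕ → ℂ satisfy G(i+2) = G(i+1) + G(i) for all i ≥ 0, let n be a nonnegative integer, and let w ∈ ℂ be such that Δ := ∑_{s=0}^{n+1} fib-binom(n+1, s) · (−1)^{⌈(n−s+1)/2⌉} · w^{n−s+1} ≠ 0 and such that w^k · G(k)^n → 0 as k → ∞. Then the series ∑_{j=0}^{∞} w^j · G(j)^n converges and equals ( ∑_{s=0}^{n+1} fib-binom(n+1, s)·(−1)^{⌈(n−s+1)/2⌉} · ∑_{j=0}^{s−1} w^{j+n−s+1}·G(j)^n ) / Δ. -/

import Mathlib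

open Finset Real

/-- The Fibonomial coefficient `fib-binom(p, q) = ∏_{j=1}^{q} F(p-q+j) / F(j)`. -/
noncomputable def fibBinom (p q : ℕ) : ℂ :=
  ∏ j ∈ Finset.Icc 1 q, (Nat.fib (p - q + j) : ℂ) / (Nat.fib j : ℂ)

noncomputable section
namespace GenFibAux


def Φ : ℂ := ((1 + Real.sqrt 5) / 2 : ℝ)
def Ψ : ℂ := ((1 - Real.sqrt 5) / 2 : ℝ)
def Q : ℂ := Φ / Ψ

lemma Φ_eq : Φ = (goldenRatio : ℝ) := rfl
lemma Ψ_eq : Ψ = (goldenConj : ℝ) := rfl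

lemma Ψ_ne : Ψ ≠ 0 := by
  rw [Ψ_eq, Complex.ofReal_ne_zero]; exact goldenConj_ne_zero

lemma Φ_ne : Φ ≠ 0 := by
  rw [Φ_eq, Complex.ofReal_ne_zero]; exact goldenRatio_ne_zero

lemma ΦΨ : Φ * Ψ = -1 := by
  rw [Φ_eq, Ψ_eq, ← Complex.ofReal_mul, goldenRatio_mul_goldenConj]; norm_num

lemma QΨ : Q * Ψ = Φ := by
  rw [Q, div_mul_cancel₀ _ Ψ_ne]

lemma sub_ne : Φ - Ψ ≠ 0 := by
  rw [Φ_eq, Ψ_eq, ← Complex.ofReal_sub, Complex.ofReal_ne_zero, goldenRatio_sub_goldenConj]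
  positivity

lemma fibC (k : ℕ) : (Nat.fib k : ℂ) * (Φ - Ψ) = Φ ^ k - Ψ ^ k := by
  have h := Real.coe_fib_eq k
  have h5 : (Real.sqrt 5) ≠ 0 := by positivity
  rw [Φ_eq, Ψ_eq, ← Complex.ofReal_pow, ← Complex.ofReal_pow, ← Complex.ofReal_sub,
    ← Complex.ofReal_sub, ← Complex.ofReal_natCast, ← Complex.ofReal_mul]
  rw [Complex.ofReal_inj, goldenRatio_sub_goldenConj, h, div_mul_cancel₀ _ h5]

lemma Qpow (k : ℕ) : (Q ^ k - 1) * Ψ ^ k = (Nat.fib k : ℂ) * (Φ - Ψ) := by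
  rw [fibC, sub_mul, ← mul_pow, QΨ, one_mul]

lemma absΨ : ‖Ψ‖ = -goldenConj := by
  rw [Ψ_eq, Complex.norm_real, Real.norm_eq_abs, abs_of_neg goldenConj_neg]

lemma absΦ : ‖Φ‖ = goldenRatio := by
  rw [Φ_eq, Complex.norm_real, Real.norm_eq_abs, abs_of_pos goldenRatio_pos]

lemma one_lt_absQ : 1 < ‖Q‖ := by
  rw [Q, norm_div, absΦ, absΨ]
  rw [lt_div_iff₀ (by linarith [neg_one_lt_goldenConj, goldenConj_neg])]
  nlinarith [one_lt_goldenRatio, neg_one_lt_goldenConj, goldenConj_neg]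

lemma hQ : ∀ j : ℕ, 0 < j → Q ^ j ≠ 1 := by
  intro j hj h
  have h2 : ‖Q ^ j‖ = 1 := by rw [h, norm_one]
  rw [norm_pow] at h2
  have : 1 < ‖Q‖ ^ j := one_lt_pow₀ one_lt_absQ (by omega)
  rw [h2] at this; exact lt_irrefl 1 this



def Dq (q : ℂ) (s : ℕ) : ℂ := ∏ j ∈ range s, (q ^ (j + 1) - 1)
def Nq (q : ℂ) (m s : ℕ) : ℂ := ∏ j ∈ range s, (q ^ (m - s + j + 1) - 1)
def gbin (q : ℂ) (m s : ℕ) : ℂ := Nq q m s / Dq q s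

lemma Dq_ne {q : ℂ} (hq : ∀ j : ℕ, 0 < j → q ^ j ≠ 1) : ∀ s, Dq q s ≠ 0 := by
  intro s
  exact Finset.prod_ne_zero_iff.mpr fun j _ => sub_ne_zero.mpr (hq (j + 1) (by omega))

lemma gbin_zero (q : ℂ) (m : ℕ) : gbin q m 0 = 1 := by simp [gbin, Nq, Dq]

lemma gbin_diag {q : ℂ} (hq : ∀ j : ℕ, 0 < j → q ^ j ≠ 1) (m : ℕ) : gbin q m m = 1 := by
  rw [gbin, Nq, Dq, Nat.sub_self]
  simp only [Nat.zero_add]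
  exact div_self (Dq_ne hq m)

lemma gbin_pascal {q : ℂ} (hq : ∀ j : ℕ, 0 < j → q ^ j ≠ 1) {m t : ℕ}
    (h1 : 1 ≤ t) (h2 : t ≤ m) :
    gbin q (m + 1) t = q ^ t * gbin q m t + gbin q m (t - 1) := by
  obtain ⟨u, rfl⟩ : ∃ u, t = u + 1 := ⟨t - 1, by omega⟩
  have hN1 : Nq q (m + 1) (u + 1) = Nq q m u * (q ^ (m + 1) - 1) := by
    rw [Nq, Nq, prod_range_succ, show m + 1 - (u + 1) + u + 1 = m + 1 from by omega]
    congr 1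
    exact prod_congr rfl fun j _ => by
      rw [show m + 1 - (u + 1) + j + 1 = m - u + j + 1 from by omega]
  have hN2 : Nq q m (u + 1) = Nq q m u * (q ^ (m - u) - 1) := by
    rw [Nq, Nq, prod_range_succ', show m - (u + 1) + 0 + 1 = m - u from by omega]
    congr 1
    exact prod_congr rfl fun j _ => by
      rw [show m - (u + 1) + (j + 1) + 1 = m - u + j + 1 from by omega]
  have hD : Dq q (u + 1) = Dq q u * (q ^ (u + 1) - 1) := by rw [Dq, prod_range_succ, Dq]
  have key : q ^ (u + 1) * q ^ (m - u) = q ^ (m + 1) := by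
    rw [← pow_add]; congr 1; omega
  rw [gbin, gbin, gbin, hN1, hN2, hD, Nat.add_sub_cancel, ← key]
  have hDu := Dq_ne hq (q := q) u
  have hu1 : q ^ (u + 1) - 1 ≠ 0 := sub_ne_zero.mpr (hq (u + 1) (by omega))
  field_simp
  ring

lemma choose2 (s : ℕ) : (s + 1).choose 2 = s.choose 2 + s := by
  rw [Nat.choose_succ_succ, Nat.choose_one_right, Nat.add_comm]

lemma cauchy {q : ℂ} (hq : ∀ j : ℕ, 0 < j → q ^ j ≠ 1) (x : ℂ) : ∀ (m : ℕ) (y : ℂ),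
    ∏ i ∈ range m, (x + q ^ i * y) =
      ∑ s ∈ range (m + 1), q ^ (s.choose 2) * gbin q m s * y ^ s * x ^ (m - s) := by
  intro m
  induction m with
  | zero => intro y; simp [gbin_zero]
  | succ m ih =>
    intro y
    have lhs1 : ∏ i ∈ range (m + 1), (x + q ^ i * y)
        = (∑ s ∈ range (m + 1), q ^ (s.choose 2) * gbin q m s * (q * y) ^ s * x ^ (m - s))
          * (x + y) := by
      rw [prod_range_succ']
      congr 1
      · rw [← ih (q * y)]
        exact prod_congr rfl fun i _ => by rw [pow_succ']; ring
      · rw [pow_zero, one_mul]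
    rw [lhs1, mul_add, Finset.sum_mul, Finset.sum_mul]
    rw [Finset.sum_range_succ
      (f := fun s => q ^ (s.choose 2) * gbin q (m + 1) s * y ^ s * x ^ (m + 1 - s))]
    rw [Finset.sum_range_succ'
      (f := fun s => q ^ (s.choose 2) * gbin q (m + 1) s * y ^ s * x ^ (m + 1 - s))]
    rw [Finset.sum_range_succ'
      (f := fun s => q ^ (s.choose 2) * gbin q m s * (q * y) ^ s * x ^ (m - s) * x)]
    rw [Finset.sum_range_succ
      (f := fun s => q ^ (s.choose 2) * gbin q m s * (q * y) ^ s * x ^ (m - s) * y)]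
    have mid : ∀ s ∈ range m,
        q ^ ((s+1).choose 2) * gbin q (m + 1) (s+1) * y ^ (s+1) * x ^ (m + 1 - (s+1))
        = q ^ ((s+1).choose 2) * gbin q m (s+1) * (q * y) ^ (s+1) * x ^ (m - (s+1)) * x
          + q ^ (s.choose 2) * gbin q m s * (q * y) ^ s * x ^ (m - s) * y := by
      intro s hs
      rw [mem_range] at hs
      rw [gbin_pascal hq (by omega) (by omega), Nat.add_sub_cancel, choose2 s]
      rw [show m + 1 - (s + 1) = m - (s+1) + 1 from by omega,
        show m - s = m - (s+1) + 1 from by omega]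
      ring
    rw [Finset.sum_congr rfl mid, Finset.sum_add_distrib]
    have b1 : q ^ ((0:ℕ).choose 2) * gbin q (m + 1) 0 * y ^ 0 * x ^ (m + 1 - 0)
        = q ^ ((0:ℕ).choose 2) * gbin q m 0 * (q * y) ^ 0 * x ^ (m - 0) * x := by
      simp [gbin_zero, pow_succ]
    have b2 : q ^ ((m+1).choose 2) * gbin q (m + 1) (m+1) * y ^ (m+1) * x ^ (m + 1 - (m+1))
        = q ^ (m.choose 2) * gbin q m m * (q * y) ^ m * x ^ (m - m) * y := by
      rw [gbin_diag hq, gbin_diag hq, Nat.sub_self, Nat.sub_self, choose2 m]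
      ring
    rw [b1, b2]
    ring


lemma fibBinom_range (p s : ℕ) :
    fibBinom p s = ∏ j ∈ range s, ((Nat.fib (p - s + j + 1) : ℂ) / (Nat.fib (j + 1) : ℂ)) := by
  rw [fibBinom, ← Finset.Ico_add_one_right_eq_Icc, Finset.prod_Ico_eq_prod_range]
  rw [show s + 1 - 1 = s from by omega]
  exact prod_congr rfl fun j _ => by
    rw [show p - s + (1 + j) = p - s + j + 1 from by omega, show 1 + j = j + 1 from by omega]

def Pf (k : ℕ) : ℂ := ∏ j ∈ range k, (Nat.fib (j + 1) : ℂ)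

lemma fib_succ_ne (j : ℕ) : (Nat.fib (j + 1) : ℂ) ≠ 0 :=
  Nat.cast_ne_zero.mpr (Nat.fib_pos.mpr (by omega)).ne'

lemma Pf_ne (k : ℕ) : Pf k ≠ 0 :=
  Finset.prod_ne_zero_iff.mpr fun j _ => fib_succ_ne j

lemma fibBinom_factorial (p s : ℕ) (h : s ≤ p) :
    fibBinom p s = Pf p / (Pf s * Pf (p - s)) := by
  have key := Finset.prod_range_add (fun j => (Nat.fib (j + 1) : ℂ)) (p - s) s
  rw [show p - s + s = p from by omega] at key
  rw [fibBinom_range, prod_div_distrib]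
  have keq : Pf p = Pf (p - s) * ∏ j ∈ range s, (Nat.fib (p - s + j + 1) : ℂ) := by
    rw [Pf, key, Pf]
  rw [keq, show (∏ j ∈ range s, (Nat.fib (j+1):ℂ)) = Pf s from rfl]
  rw [mul_comm (Pf s) (Pf (p - s)), mul_div_mul_left _ _ (Pf_ne (p - s))]

lemma fibBinom_symm (p s : ℕ) (h : s ≤ p) : fibBinom p (p - s) = fibBinom p s := by
  rw [fibBinom_factorial p (p - s) (by omega), fibBinom_factorial p s h,
    show p - (p - s) = s from by omega, mul_comm]

lemma choose2' (s : ℕ) : (s + 1).choose 2 = s.choose 2 + s := by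
  rw [Nat.choose_succ_succ, Nat.choose_one_right, Nat.add_comm]

lemma parity (s : ℕ) : (s.choose 2 + s) % 2 = (s + 1) / 2 % 2 := by
  induction s using Nat.twoStepInduction with
  | zero => rfl
  | one => rfl
  | more s ih ih2 =>
    clear ih2
    rw [show s + 2 = s + 1 + 1 from rfl, choose2' (s+1), choose2' s]
    rw [show s.choose 2 + s + (s+1) + (s+1+1) = (s.choose 2 + s + 1) + 2*(s+1) from by ring]
    rw [Nat.add_mul_mod_self_left]
    rw [show s + 1 + 1 + 1 = s + 1 + 2 * 1 from by ring]
    rw [Nat.add_mul_div_left _ _ (by norm_num : (0:ℕ) < 2)]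
    generalize (s.choose 2 + s) = Y at ih ⊢
    generalize (s+1)/2 = U at ih ⊢
    omega

lemma sign_eq (s : ℕ) : (-1 : ℂ) ^ (s.choose 2 + s) = (-1) ^ ((s + 1) / 2) := by
  rw [neg_one_pow_eq_pow_mod_two, neg_one_pow_eq_pow_mod_two (n := (s + 1) / 2), parity s]



lemma gbin_prod (q : ℂ) (m s : ℕ) :
    gbin q m s = ∏ j ∈ range s, ((q ^ (m - s + j + 1) - 1) / (q ^ (j + 1) - 1)) := by
  rw [gbin, Nq, Dq, prod_div_distrib]

lemma gbin_fib (n s : ℕ) (hs : s ≤ n + 1) :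
    gbin Q (n + 1) s * Ψ ^ (s * (n + 1 - s)) = fibBinom (n + 1) s := by
  rw [gbin_prod, fibBinom_range, Nat.mul_comm, pow_mul]
  rw [show (Ψ ^ (n + 1 - s)) ^ s = ∏ _j ∈ range s, Ψ ^ (n + 1 - s) from by
    rw [Finset.prod_const, card_range]]
  rw [← prod_mul_distrib]
  refine prod_congr rfl fun j _ => ?_
  have e1 := Qpow (n + 1 - s + j + 1)
  have e2 := Qpow (j + 1)
  have hd : Q ^ (j + 1) - 1 ≠ 0 := sub_ne_zero.mpr (hQ (j + 1) (by omega))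
  have hc : Ψ ^ (j + 1) * (Φ - Ψ) ≠ 0 := mul_ne_zero (pow_ne_zero _ Ψ_ne) sub_ne
  rw [div_mul_eq_mul_div, div_eq_div_iff hd (fib_succ_ne j)]
  refine mul_right_cancel₀ hc ?_
  rw [show n + 1 - s + j + 1 = n + 1 - s + (j + 1) from by omega] at e1 ⊢
  rw [pow_add (Ψ)] at e1
  linear_combination ((Nat.fib (j+1) : ℂ)) * (Φ - Ψ) * e1 - ((Nat.fib (n + 1 - s + (j+1)) : ℂ)) * (Φ - Ψ) * e2

lemma root_eq (n i : ℕ) (hi : i ≤ n) : Q ^ i * Ψ ^ n = Φ ^ i * Ψ ^ (n - i) := by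
  have h : Ψ ^ n = Ψ ^ i * Ψ ^ (n - i) := by rw [← pow_add]; congr 1; omega
  rw [h, ← mul_assoc, ← mul_pow, QΨ]

lemma nt_split (n t : ℕ) (ht : t ≤ n + 1) :
    n * t = t * (n + 1 - t) + 2 * t.choose 2 := by
  rcases t with _ | t'
  · simp
  · have hev : 2 ∣ (t' + 1) * (t' + 1 - 1) := by
      rw [Nat.add_sub_cancel]
      rcases Nat.even_or_odd t' with ⟨u, rfl⟩ | ⟨u, rfl⟩
      · exact ⟨(u + u + 1) * u, by ring⟩
      · exact ⟨(u + 1) * (2 * u + 1), by ring⟩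
    rw [Nat.choose_two_right, Nat.mul_div_cancel' hev, Nat.add_sub_cancel]
    have h1 : t' ≤ n := by omega
    zify [h1, show t' + 1 ≤ n + 1 from by omega]
    ring

lemma coeff_eq (n t : ℕ) (ht : t ≤ n + 1) :
    Q ^ (t.choose 2) * gbin Q (n + 1) t * (-Ψ ^ n) ^ t
      = fibBinom (n + 1) t * (-1 : ℂ) ^ ((t + 1) / 2) := by
  have hψ2 : Q * Ψ ^ 2 = -1 := by rw [sq, ← mul_assoc, QΨ, ΦΨ]
  rw [neg_pow, ← pow_mul, nt_split n t ht, pow_add, ← sign_eq]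
  calc Q ^ t.choose 2 * gbin Q (n + 1) t * ((-1:ℂ) ^ t * (Ψ ^ (t * (n + 1 - t)) * Ψ ^ (2 * t.choose 2)))
      = (gbin Q (n + 1) t * Ψ ^ (t * (n + 1 - t))) * ((Q * Ψ ^ 2) ^ t.choose 2 * (-1:ℂ) ^ t) := by
        rw [mul_pow, ← pow_mul]; ring
    _ = fibBinom (n + 1) t * (-1 : ℂ) ^ (t.choose 2 + t) := by
        rw [gbin_fib n t ht, hψ2, ← pow_add]

lemma prod_formula (n : ℕ) (x : ℂ) :
    ∏ i ∈ range (n + 1), (x - Φ ^ i * Ψ ^ (n - i)) =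
      ∑ s ∈ range (n + 2), fibBinom (n + 1) s * (-1 : ℂ) ^ ((n + 1 - s + 1) / 2) * x ^ s := by
  have lhs : ∏ i ∈ range (n + 1), (x - Φ ^ i * Ψ ^ (n - i))
      = ∏ i ∈ range (n + 1), (x + Q ^ i * (-Ψ ^ n)) := by
    refine prod_congr rfl fun i hi => ?_
    rw [mem_range] at hi
    rw [mul_neg, ← sub_eq_add_neg, root_eq n i (by omega)]
  rw [lhs, cauchy hQ x (n + 1) (-Ψ ^ n), ← Finset.sum_range_reflect]
  refine sum_congr rfl fun s hs => ?_
  rw [mem_range] at hs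
  rw [show n + 1 + 1 - 1 - s = n + 1 - s from by omega]
  rw [show n + 1 - (n + 1 - s) = s from by omega]
  rw [coeff_eq n (n + 1 - s) (by omega)]
  rw [fibBinom_symm (n + 1) s (by omega)]


lemma Φ_sq : Φ ^ 2 = Φ + 1 := by
  rw [Φ_eq, ← Complex.ofReal_pow, goldenRatio_sq]; push_cast; ring

lemma Ψ_sq : Ψ ^ 2 = Ψ + 1 := by
  rw [Ψ_eq, ← Complex.ofReal_pow, goldenConj_sq]; push_cast; ring

lemma binet (G : ℕ → ℂ) (hG : ∀ i, G (i + 2) = G (i + 1) + G i) :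
    ∃ A B : ℂ, ∀ m, G m = A * Φ ^ m + B * Ψ ^ m := by
  refine ⟨(G 1 - G 0 * Ψ) / (Φ - Ψ), (G 0 * Φ - G 1) / (Φ - Ψ), ?_⟩
  intro m
  induction m using Nat.twoStepInduction with
  | zero => field_simp [sub_ne]; ring
  | one => field_simp [sub_ne]; ring
  | more m ih1 ih2 =>
    have eΦ : Φ ^ (m + 2) = Φ ^ (m + 1) + Φ ^ m := by
      rw [pow_add, Φ_sq, mul_add, mul_one, ← pow_succ]
    have eΨ : Ψ ^ (m + 2) = Ψ ^ (m + 1) + Ψ ^ m := by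
      rw [pow_add, Ψ_sq, mul_add, mul_one, ← pow_succ]
    rw [hG m, ih1, ih2, eΦ, eΨ]
    ring

lemma hp (a : ℂ) (b c : ℕ) : (a ^ b) ^ c = (a ^ c) ^ b := by
  rw [← pow_mul, ← pow_mul, Nat.mul_comm]

lemma sum_root (n i : ℕ) (hi : i ≤ n) :
    ∑ s ∈ range (n + 2), fibBinom (n + 1) s * (-1 : ℂ) ^ ((n + 1 - s + 1) / 2)
      * (Φ ^ i * Ψ ^ (n - i)) ^ s = 0 := by
  rw [← prod_formula n (Φ ^ i * Ψ ^ (n - i))]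
  exact Finset.prod_eq_zero (i := i) (mem_range.mpr (by omega)) (sub_self _)

lemma rec_id (G : ℕ → ℂ) (hG : ∀ i, G (i + 2) = G (i + 1) + G i) (n : ℕ) (m : ℕ) :
    ∑ s ∈ range (n + 2), fibBinom (n + 1) s * (-1 : ℂ) ^ ((n + 1 - s + 1) / 2)
      * G (m + s) ^ n = 0 := by
  obtain ⟨A, B, hAB⟩ := binet G hG
  have expand : ∀ k, G k ^ n = ∑ i ∈ range (n + 1),
      ((n.choose i : ℂ) * (A ^ i * B ^ (n - i))) * (Φ ^ i * Ψ ^ (n - i)) ^ k := by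
    intro k
    rw [hAB k, add_pow]
    refine sum_congr rfl fun i _ => ?_
    rw [mul_pow A, mul_pow B, hp Φ k i, hp Ψ k (n - i), mul_pow (Φ ^ i) (Ψ ^ (n - i)) k]
    ring
  calc ∑ s ∈ range (n + 2), fibBinom (n + 1) s * (-1 : ℂ) ^ ((n + 1 - s + 1) / 2) * G (m + s) ^ n
      = ∑ s ∈ range (n + 2), ∑ i ∈ range (n + 1),
          ((n.choose i : ℂ) * (A ^ i * B ^ (n - i))) * (Φ ^ i * Ψ ^ (n - i)) ^ m *
          (fibBinom (n + 1) s * (-1 : ℂ) ^ ((n + 1 - s + 1) / 2) * (Φ ^ i * Ψ ^ (n - i)) ^ s) := by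
        refine sum_congr rfl fun s _ => ?_
        rw [expand (m + s), Finset.mul_sum]
        refine sum_congr rfl fun i _ => ?_
        rw [pow_add (Φ ^ i * Ψ ^ (n - i))]
        ring
    _ = ∑ i ∈ range (n + 1), ((n.choose i : ℂ) * (A ^ i * B ^ (n - i))) * (Φ ^ i * Ψ ^ (n - i)) ^ m *
          ∑ s ∈ range (n + 2), (fibBinom (n + 1) s * (-1 : ℂ) ^ ((n + 1 - s + 1) / 2) *
            (Φ ^ i * Ψ ^ (n - i)) ^ s) := by
        rw [Finset.sum_comm]
        exact sum_congr rfl fun i _ => by rw [Finset.mul_sum]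
    _ = 0 := by
        refine Finset.sum_eq_zero fun i hi => ?_
        rw [mem_range] at hi
        rw [sum_root n i (by omega), mul_zero]


lemma abs_r_lt (n i1 i2 : ℕ) (h12 : i1 < i2) (h2 : i2 ≤ n) :
    ‖Φ ^ i1 * Ψ ^ (n - i1)‖ < ‖Φ ^ i2 * Ψ ^ (n - i2)‖ := by
  rw [norm_mul, norm_mul, norm_pow, norm_pow, norm_pow, norm_pow, absΦ, absΨ, ← inv_goldenRatio]
  rw [inv_pow, inv_pow, ← div_eq_mul_inv, ← div_eq_mul_inv,
    div_lt_div_iff₀ (pow_pos goldenRatio_pos _) (pow_pos goldenRatio_pos _), ← pow_add, ← pow_add]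
  exact pow_lt_pow_right₀ one_lt_goldenRatio (by omega)

lemma pow_expand (A B w : ℂ) (n j : ℕ) :
    w ^ j * (A * Φ ^ j + B * Ψ ^ j) ^ n = ∑ i ∈ range (n + 1),
      ((n.choose i : ℂ) * (A ^ i * B ^ (n - i))) * (w * (Φ ^ i * Ψ ^ (n - i))) ^ j := by
  rw [add_pow, Finset.mul_sum]
  refine sum_congr rfl fun i _ => ?_
  rw [mul_pow w, mul_pow A, mul_pow B, hp Φ j i, hp Ψ j (n - i), mul_pow (Φ ^ i) (Ψ ^ (n - i)) j]
  ring

end GenFibAux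

end

open GenFibAux Filter in
theorem generating_function_G_pow (G : ℕ → ℂ) (hG : ∀ i, G (i + 2) = G (i + 1) + G i)
    (n : ℕ) (w : ℂ)
    (hΔ : ∑ s ∈ Finset.range (n + 2),
      fibBinom (n + 1) s * (-1 : ℂ) ^ ((n + 1 - s + 1) / 2) * w ^ (n + 1 - s) ≠ 0)
    (hlim : Filter.Tendsto (fun k : ℕ => w ^ k * G k ^ n) Filter.atTop (nhds 0)) :
    HasSum (fun j : ℕ => w ^ j * G j ^ n)
      ((∑ s ∈ Finset.range (n + 2), fibBinom (n + 1) s * (-1 : ℂ) ^ ((n + 1 - s + 1) / 2) *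
          ∑ j ∈ Finset.range s, w ^ (j + (n + 1 - s)) * G j ^ n) /
        ∑ s ∈ Finset.range (n + 2),
          fibBinom (n + 1) s * (-1 : ℂ) ^ ((n + 1 - s + 1) / 2) * w ^ (n + 1 - s)) := by
  classical
  set Δ : ℂ := ∑ s ∈ Finset.range (n + 2),
      fibBinom (n + 1) s * (-1 : ℂ) ^ ((n + 1 - s + 1) / 2) * w ^ (n + 1 - s) with hΔdef
  set Cnum : ℂ := ∑ s ∈ Finset.range (n + 2),
      fibBinom (n + 1) s * (-1 : ℂ) ^ ((n + 1 - s + 1) / 2) *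
        ∑ j ∈ Finset.range s, w ^ (j + (n + 1 - s)) * G j ^ n with hCdef
  -- Part 1 : partial sum identity
  have key : ∀ M : ℕ, Δ * (∑ j ∈ Finset.range (M + (n + 1)), w ^ j * G j ^ n)
      = Cnum + ∑ s ∈ Finset.range (n + 2),
          fibBinom (n + 1) s * (-1 : ℂ) ^ ((n + 1 - s + 1) / 2) *
            ∑ u ∈ Finset.range (n + 1 - s), w ^ (M + u + n + 1) * G (M + u + s) ^ n := by
    intro M
    have hw3 : ∀ s, s ≤ n + 1 → w ^ (n + 1 - s) * (∑ j ∈ Finset.range (M + (n + 1)), w ^ j * G j ^ n)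
        = (∑ j ∈ Finset.range s, w ^ (j + (n + 1 - s)) * G j ^ n)
          + ((∑ j ∈ Finset.range M, w ^ (j + n + 1) * G (j + s) ^ n)
            + (∑ u ∈ Finset.range (n + 1 - s), w ^ (M + u + n + 1) * G (M + u + s) ^ n)) := by
      intro s hs
      rw [Finset.mul_sum]
      rw [show M + (n + 1) = s + (M + (n + 1 - s)) from by omega]
      rw [Finset.sum_range_add (f := fun j => w ^ (n + 1 - s) * (w ^ j * G j ^ n))]
      rw [Finset.sum_range_add (f := fun j => w ^ (n + 1 - s) * (w ^ (s + j) * G (s + j) ^ n))]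
      congr 1
      · refine Finset.sum_congr rfl fun j _ => ?_
        rw [pow_add w j (n + 1 - s)]; ring
      congr 1
      · refine Finset.sum_congr rfl fun j _ => ?_
        rw [Nat.add_comm s j, show j + n + 1 = (n + 1 - s) + (j + s) from by omega, pow_add]
        ring
      · refine Finset.sum_congr rfl fun u _ => ?_
        rw [show s + (M + u) = M + u + s from by omega,
          show M + u + n + 1 = (n + 1 - s) + (M + u + s) from by omega, pow_add]
        ring
    have inner : ∀ s ∈ Finset.range (n + 2),
        fibBinom (n + 1) s * (-1 : ℂ) ^ ((n + 1 - s + 1) / 2) * w ^ (n + 1 - s) *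
          (∑ j ∈ Finset.range (M + (n + 1)), w ^ j * G j ^ n)
        = fibBinom (n + 1) s * (-1 : ℂ) ^ ((n + 1 - s + 1) / 2) *
            (∑ j ∈ Finset.range s, w ^ (j + (n + 1 - s)) * G j ^ n)
          + ((∑ j ∈ Finset.range M, w ^ (j + n + 1) *
              (fibBinom (n + 1) s * (-1 : ℂ) ^ ((n + 1 - s + 1) / 2) * G (j + s) ^ n))
            + fibBinom (n + 1) s * (-1 : ℂ) ^ ((n + 1 - s + 1) / 2) *
              (∑ u ∈ Finset.range (n + 1 - s), w ^ (M + u + n + 1) * G (M + u + s) ^ n)) := by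
      intro s hs
      rw [Finset.mem_range] at hs
      have hmb : fibBinom (n + 1) s * (-1 : ℂ) ^ ((n + 1 - s + 1) / 2) *
          (∑ j ∈ Finset.range M, w ^ (j + n + 1) * G (j + s) ^ n)
          = ∑ j ∈ Finset.range M, w ^ (j + n + 1) *
              (fibBinom (n + 1) s * (-1 : ℂ) ^ ((n + 1 - s + 1) / 2) * G (j + s) ^ n) := by
        rw [Finset.mul_sum]
        exact Finset.sum_congr rfl fun j _ => by ring
      calc fibBinom (n + 1) s * (-1 : ℂ) ^ ((n + 1 - s + 1) / 2) * w ^ (n + 1 - s) *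
            (∑ j ∈ Finset.range (M + (n + 1)), w ^ j * G j ^ n)
          = fibBinom (n + 1) s * (-1 : ℂ) ^ ((n + 1 - s + 1) / 2) *
            (w ^ (n + 1 - s) * (∑ j ∈ Finset.range (M + (n + 1)), w ^ j * G j ^ n)) := by ring
        _ = _ := by rw [hw3 s (by omega), mul_add, mul_add, hmb]
    rw [hΔdef, Finset.sum_mul, Finset.sum_congr rfl inner, Finset.sum_add_distrib,
      Finset.sum_add_distrib, ← hCdef]
    have hmid : ∑ s ∈ Finset.range (n + 2), ∑ j ∈ Finset.range M, w ^ (j + n + 1) *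
        (fibBinom (n + 1) s * (-1 : ℂ) ^ ((n + 1 - s + 1) / 2) * G (j + s) ^ n) = 0 := by
      rw [Finset.sum_comm]
      refine Finset.sum_eq_zero fun j _ => ?_
      rw [← Finset.mul_sum, rec_id G hG n j, mul_zero]
    rw [hmid, zero_add]
  -- Part 2 : limits
  have hElim : Tendsto (fun M => ∑ s ∈ Finset.range (n + 2),
      fibBinom (n + 1) s * (-1 : ℂ) ^ ((n + 1 - s + 1) / 2) *
        ∑ u ∈ Finset.range (n + 1 - s), w ^ (M + u + n + 1) * G (M + u + s) ^ n)
      atTop (nhds 0) := by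
    have hterm : ∀ s ∈ Finset.range (n + 2),
        Tendsto (fun M => fibBinom (n + 1) s * (-1 : ℂ) ^ ((n + 1 - s + 1) / 2) *
          ∑ u ∈ Finset.range (n + 1 - s), w ^ (M + u + n + 1) * G (M + u + s) ^ n)
          atTop (nhds 0) := by
      intro s hs
      rw [Finset.mem_range] at hs
      have hterm2 : ∀ u ∈ Finset.range (n + 1 - s),
          Tendsto (fun M => w ^ (M + u + n + 1) * G (M + u + s) ^ n) atTop (nhds 0) := by
        intro u hu
        rw [Finset.mem_range] at hu
        have comp := hlim.comp (tendsto_add_atTop_nat (u + s))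
        have heq : (fun M => w ^ (M + u + n + 1) * G (M + u + s) ^ n)
            = fun M => w ^ (n + 1 - s) *
              (w ^ (M + (u + s)) * G (M + (u + s)) ^ n) := by
          funext M
          rw [show M + (u + s) = M + u + s from by omega,
            show M + u + n + 1 = (n + 1 - s) + (M + u + s) from by omega, pow_add]
          ring
        rw [heq]
        simpa using comp.const_mul (w ^ (n + 1 - s))
      have hin := tendsto_finset_sum (Finset.range (n + 1 - s)) hterm2
      have := hin.const_mul (fibBinom (n + 1) s * (-1 : ℂ) ^ ((n + 1 - s + 1) / 2))
      simpa using this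
    have hsum := tendsto_finset_sum (Finset.range (n + 2)) hterm
    simpa using hsum
  have h2 : Tendsto (fun M => Δ * (∑ j ∈ Finset.range (M + (n + 1)), w ^ j * G j ^ n))
      atTop (nhds Cnum) := by
    rw [funext key]
    simpa using tendsto_const_nhds.add hElim
  have h3 : Tendsto (fun M => ∑ j ∈ Finset.range (M + (n + 1)), w ^ j * G j ^ n)
      atTop (nhds (Cnum / Δ)) := by
    have h4 := h2.const_mul Δ⁻¹
    have heq : (fun M => Δ⁻¹ * (Δ * (∑ j ∈ Finset.range (M + (n + 1)), w ^ j * G j ^ n)))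
        = fun M => ∑ j ∈ Finset.range (M + (n + 1)), w ^ j * G j ^ n :=
      funext fun M => inv_mul_cancel_left₀ hΔ _
    rw [heq] at h4
    rwa [show Δ⁻¹ * Cnum = Cnum / Δ from by rw [div_eq_mul_inv, mul_comm]] at h4
  have hT : Tendsto (fun N => ∑ j ∈ Finset.range N, w ^ j * G j ^ n)
      atTop (nhds (Cnum / Δ)) := (tendsto_add_atTop_iff_nat (n + 1)).mp h3
  -- Part 3 : summability
  obtain ⟨A, B, hAB⟩ := binet G hG
  have f_eq : ∀ j, w ^ j * G j ^ n = ∑ i ∈ Finset.range (n + 1),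
      ((n.choose i : ℂ) * (A ^ i * B ^ (n - i))) * (w * (Φ ^ i * Ψ ^ (n - i))) ^ j := by
    intro j
    rw [hAB j, pow_expand]
  have habs : ∀ i, i ≤ n → (n.choose i : ℂ) * (A ^ i * B ^ (n - i)) ≠ 0 →
      ‖w * (Φ ^ i * Ψ ^ (n - i))‖ < 1 := by
    by_contra hcon
    push_neg at hcon
    obtain ⟨i0, hi0n, hD0, h10⟩ := hcon
    set D : ℕ → ℂ := fun i => (n.choose i : ℂ) * (A ^ i * B ^ (n - i)) with hD
    set z : ℕ → ℂ := fun i => w * (Φ ^ i * Ψ ^ (n - i)) with hz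
    set S := (Finset.range (n + 1)).filter (fun i => D i ≠ 0 ∧ 1 ≤ ‖z i‖) with hS
    have hSne : S.Nonempty :=
      ⟨i0, Finset.mem_filter.mpr ⟨Finset.mem_range.mpr (by omega), hD0, h10⟩⟩
    obtain ⟨I, hIS, hImax⟩ := Finset.exists_max_image S (fun i => ‖z i‖) hSne
    obtain ⟨hIr, hDI, hI1⟩ := Finset.mem_filter.mp hIS
    rw [Finset.mem_range] at hIr
    have hzI : z I ≠ 0 := by
      intro h; rw [h, norm_zero] at hI1; linarith
    have hw0 : w ≠ 0 := by
      intro h; exact hzI (by rw [hz]; simp [h])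
    have hmono : ∀ i1 i2, i1 < i2 → i2 ≤ n → ‖z i1‖ < ‖z i2‖ := by
      intro i1 i2 h12 h2n
      have h := abs_r_lt n i1 i2 h12 h2n
      rw [hz]
      simp only [norm_mul]
      rw [norm_mul, norm_mul] at h
      exact mul_lt_mul_of_pos_left h (norm_pos_iff.mpr hw0)
    have hlt : ∀ i ∈ Finset.range (n + 1), i ≠ I → D i ≠ 0 →
        ‖z i‖ < ‖z I‖ := by
      intro i hir hne hDi
      rw [Finset.mem_range] at hir
      rcases lt_or_ge (‖z i‖) 1 with h | h
      · exact lt_of_lt_of_le h hI1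
      · have hiS : i ∈ S := Finset.mem_filter.mpr ⟨Finset.mem_range.mpr hir, hDi, h⟩
        have hle := hImax i hiS
        rcases Nat.lt_or_ge i I with hlt2 | hge
        · exact hmono i I hlt2 (by omega)
        · have hlt3 : I < i := by omega
          have := hmono I i hlt3 (by omega)
          linarith
    have hq0 : Tendsto (fun k => (∑ i ∈ Finset.range (n + 1), D i * z i ^ k) / z I ^ k)
        atTop (nhds 0) := by
      have hnorm : Tendsto (fun k => ‖w ^ k * G k ^ n‖) atTop (nhds 0) := by
        simpa using hlim.norm
      rw [tendsto_zero_iff_norm_tendsto_zero]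
      refine squeeze_zero (fun k => norm_nonneg _) (fun k => ?_) hnorm
      have hfk : (∑ i ∈ Finset.range (n + 1), D i * z i ^ k) = w ^ k * G k ^ n :=
        (f_eq k).symm
      rw [hfk, norm_div, norm_pow]
      have h1 : (1 : ℝ) ≤ ‖z I‖ ^ k := by
        refine one_le_pow₀ ?_
        exact hI1
      exact div_le_self (norm_nonneg _) h1
    have hq1 : Tendsto (fun k => (∑ i ∈ Finset.range (n + 1), D i * z i ^ k) / z I ^ k)
        atTop (nhds (D I)) := by
      have heq : (fun k => (∑ i ∈ Finset.range (n + 1), D i * z i ^ k) / z I ^ k)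
          = fun k => ∑ i ∈ Finset.range (n + 1), D i * (z i / z I) ^ k := by
        funext k
        rw [Finset.sum_div]
        exact Finset.sum_congr rfl fun i _ => by rw [div_pow, mul_div_assoc]
      rw [heq]
      have hterm : ∀ i ∈ Finset.range (n + 1), Tendsto (fun k => D i * (z i / z I) ^ k)
          atTop (nhds (if i = I then D I else 0)) := by
        intro i hir
        by_cases hiI : i = I
        · subst hiI
          simp only [if_pos rfl, div_self hzI, one_pow, mul_one]
          exact tendsto_const_nhds
        · rw [if_neg hiI]
          by_cases hDi : D i = 0
          · simpa [hDi] using (tendsto_const_nhds :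
              Tendsto (fun _ : ℕ => (0:ℂ)) atTop (nhds 0))
          · have hlt' := hlt i hir hiI hDi
            have hn1 : ‖z i / z I‖ < 1 := by
              rw [norm_div, div_lt_one (lt_of_lt_of_le zero_lt_one
                (by exact hI1))]
              exact hlt'
            simpa using (tendsto_pow_atTop_nhds_zero_of_norm_lt_one hn1).const_mul (D i)
      have hfs := tendsto_finset_sum (Finset.range (n + 1)) hterm
      rw [Finset.sum_ite_eq' (Finset.range (n + 1)) I (fun _ => D I)] at hfs
      rw [if_pos (Finset.mem_range.mpr (by omega : I < n + 1))] at hfs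
      exact hfs
    have hDI0 : D I = 0 := by
      refine tendsto_nhds_unique ?_ hq0
      have heq2 : (fun k => (∑ i ∈ Finset.range (n + 1), D i * z i ^ k) / z I ^ k)
          = fun k => (w ^ k * G k ^ n) / z I ^ k := by
        funext k; rw [← f_eq k]
      rw [heq2] at hq1 ⊢
      exact hq1
    exact hDI hDI0
  -- summability
  have hsummable : Summable (fun j : ℕ => w ^ j * G j ^ n) := by
    have heqf : (fun j : ℕ => w ^ j * G j ^ n) = fun j => ∑ i ∈ Finset.range (n + 1),
        ((n.choose i : ℂ) * (A ^ i * B ^ (n - i))) * (w * (Φ ^ i * Ψ ^ (n - i))) ^ j :=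
      funext f_eq
    rw [heqf]
    refine summable_sum fun i hi => ?_
    rw [Finset.mem_range] at hi
    by_cases hDi : ((n.choose i : ℂ) * (A ^ i * B ^ (n - i))) = 0
    · simpa [hDi] using (summable_zero : Summable fun _ : ℕ => (0:ℂ))
    · have h2 : ‖w * (Φ ^ i * Ψ ^ (n - i))‖ < 1 := by
        exact habs i (by omega) hDi
      exact (summable_geometric_of_norm_lt_one h2).mul_left _
  -- conclusion
  have hhs := hsummable.hasSum
  have huniq : (∑' j : ℕ, w ^ j * G j ^ n) = Cnum / Δ :=
    tendsto_nhds_unique hhs.tendsto_sum_nat hT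
  exact huniq ▸ hhs
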